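/- Two elements x, y of a profinite group G are conjugate in G if and only if for every open normal subgroup M of G the images Mx and My are conjugate in G/M. -/

import Mathlib

/-- Lemma 2.1: two elements `x, y` of a profinite group `G` are conjugate in `G`
if and only if for every open normal subgroup `M` of `G` their images are
conjugate in `G/M`. -/
theorem stmt5 {G : Type*} [Group G] [TopologicalSpace G] [IsTopologicalGroup G]
    [CompactSpace G] [T2Space G] [TotallyDisconnectedSpace G] (x y : G) :
    IsConj x y ↔
      ∀ (M : Subgroup G) [M.Normal], IsOpen (M : Set G) →
        IsConj (x : G ⧸ M) (y : G ⧸ M) := by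
  constructor
  · intro h M _ _
    obtain ⟨c, hc⟩ := isConj_iff.mp h
    exact isConj_iff.mpr ⟨c, by
      rw [← QuotientGroup.mk_mul, ← QuotientGroup.mk_inv, ← QuotientGroup.mk_mul, hc]⟩
  · intro h
    by_contra hxy
    -- The conjugacy class of x is compact, hence closed.
    set C : Set G := (fun g : G => g * x * g⁻¹) '' Set.univ with hC
    have hCct : IsCompact C := by
      apply IsCompact.image isCompact_univ
      continuity
    have hCclosed : IsClosed C := hCct.isClosed
    have hyC : y ∉ C := by
      rintro ⟨g, -, rfl⟩
      exact hxy (isConj_iff.mpr ⟨g, rfl⟩)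
    -- y • Cᶜ⁻¹ ... consider U = y⁻¹ • Cᶜ, open nhd of 1
    have hUopen : IsOpen ((y⁻¹ * ·) '' Cᶜ) := by
      exact (IsOpen.smul hCclosed.isOpen_compl y⁻¹ : _)
    have h1U : (1 : G) ∈ (y⁻¹ * ·) '' Cᶜ := ⟨y, hyC, by group⟩
    obtain ⟨V, hVclopen, h1V, hVU⟩ := compact_exists_isClopen_in_isOpen hUopen h1U
    obtain ⟨M, hM⟩ := IsTopologicalGroup.exist_openNormalSubgroup_sub_clopen_nhds_of_one hVclopen h1V
    obtain ⟨c, hc⟩ := isConj_iff.mp (h M.toSubgroup M.isOpen')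
    obtain ⟨g, rfl⟩ := QuotientGroup.mk_surjective c
    have : ((g * x * g⁻¹ : G) : G ⧸ M.toSubgroup) = (y : G ⧸ M.toSubgroup) := by
      simpa using hc
    have hmem : y⁻¹ * (g * x * g⁻¹) ∈ M.toSubgroup := by
      rw [QuotientGroup.eq] at this
      simpa [mul_assoc] using M.toSubgroup.inv_mem this
    obtain ⟨z, hz, hz'⟩ := hVU (hM hmem)
    have hzeq : z = g * x * g⁻¹ := mul_left_cancel hz'
    exact hz (hzeq ▸ ⟨g, trivial, rfl⟩)
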